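/- Let P be a countable Köthe set on a set I. Then the Köthe space λ(P) is closed under pointwise multiplication (i.e., x, y ∈ λ(P) implies (x_i y_i)_{i∈I} ∈ λ(P)) if and only if P ≺ P². -/

import Mathlib

private lemma kothe_chain {I : Type*} (P : Set (I → ℝ)) (Q : ℕ → I → ℝ)
    (hQ : ∀ n, Q n ∈ P)
    (hP2 : ∀ p ∈ P, ∀ q ∈ P, ∃ r ∈ P, ∀ i, max (p i) (q i) ≤ r i) :
    ∃ r : ℕ → I → ℝ, (∀ n, r n ∈ P) ∧ (∀ n i, r n i ≤ r (n + 1) i) ∧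
      (∀ n i, Q n i ≤ r n i) := by
  choose R hR1 hR2 using hP2
  let f : ℕ → {g : I → ℝ // g ∈ P} := fun n =>
    Nat.rec ⟨Q 0, hQ 0⟩ (fun n ih => ⟨R ih.1 ih.2 (Q (n+1)) (hQ (n+1)), hR1 _ _ _ _⟩) n
  refine ⟨fun n => (f n).1, fun n => (f n).2, ?_, ?_⟩
  · intro n i
    exact le_trans (le_max_left _ _) (hR2 (f n).1 (f n).2 (Q (n+1)) (hQ (n+1)) i)
  · intro n i
    cases n with
    | zero => exact le_refl _
    | succ n => exact le_trans (le_max_right _ _) (hR2 (f n).1 (f n).2 (Q (n+1)) (hQ (n+1)) i)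

private lemma kothe_seq {I : Type*} (p : I → ℝ) (r : ℕ → I → ℝ)
    (hM : ∀ i, ∃ M, ∀ m, M ≤ m → p i ≤ 4 ^ m * (r m i) ^ 2)
    (h4 : ∀ m : ℕ, ∃ i, (4 : ℝ) ^ m * (r m i) ^ 2 < p i) :
    ∃ (ι : ℕ → I) (m : ℕ → ℕ), Function.Injective ι ∧ StrictMono m ∧ (∀ k, k ≤ m k) ∧
      ∀ k, (4 : ℝ) ^ (m k) * (r (m k) (ι k)) ^ 2 < p (ι k) := by
  classical
  choose Mf hMf using hM
  have step : ∀ s : Finset I × ℕ, ∃ (m' : ℕ) (i' : I),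
      s.2 < m' ∧ i' ∉ s.1 ∧ (4 : ℝ) ^ m' * (r m' i') ^ 2 < p i' := by
    rintro ⟨F, m₀⟩
    set m' := max (m₀ + 1) (F.sup Mf) with hm'
    obtain ⟨i', hi'⟩ := h4 m'
    refine ⟨m', i', lt_of_lt_of_le (Nat.lt_succ_self _) (le_max_left _ _), ?_, hi'⟩
    intro hiF
    have := hMf i' m' (le_trans (Finset.le_sup hiF) (le_max_right _ _))
    linarith
  choose nm ni h1 h2 h3 using step
  let st : ℕ → Finset I × ℕ := fun k =>
    Nat.rec (∅, 0) (fun _ s => (insert (ni s) s.1, nm s)) k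
  set ι : ℕ → I := fun k => ni (st k) with hι
  set m : ℕ → ℕ := fun k => nm (st k) with hm
  have hst : ∀ k, st (k + 1) = (insert (ι k) (st k).1, m k) := fun k => rfl
  have hmono : StrictMono m := by
    apply strictMono_nat_of_lt_succ
    intro k
    have := h1 (st (k + 1))
    rw [hst k] at this
    exact this
  have hmem : ∀ j k, j < k → ι j ∈ (st k).1 := by
    intro j k hjk
    induction k with
    | zero => omega
    | succ k ih =>
      rw [hst k]
      rcases Nat.lt_succ_iff_lt_or_eq.mp hjk with h | h
      · exact Finset.mem_insert_of_mem (ih h)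
      · subst h; exact Finset.mem_insert_self _ _
  have hinj : Function.Injective ι := by
    intro j k hjk
    by_contra hne
    rcases Nat.lt_or_ge j k with h | h
    · exact h2 (st k) (by rw [show ni (st k) = ι k from rfl, ← hjk]; exact hmem j k h)
    · have h' : k < j := lt_of_le_of_ne h (Ne.symm hne)
      exact h2 (st j) (by rw [show ni (st j) = ι j from rfl, hjk]; exact hmem k j h')
  exact ⟨ι, m, hinj, hmono, fun k => hmono.le_apply, fun k => h3 (st k)⟩

theorem kothe_closed_under_mul_iff {I : Type*} (P : Set (I → ℝ))
    (hPcount : P.Countable)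
    (hP0 : ∀ p ∈ P, ∀ i, 0 ≤ p i)
    (hP1 : ∀ i, ∃ p ∈ P, 0 < p i)
    (hP2 : ∀ p ∈ P, ∀ q ∈ P, ∃ r ∈ P, ∀ i, max (p i) (q i) ≤ r i) :
    (∀ x y : I → ℂ,
        (∀ p ∈ P, Summable fun i => ‖x i‖ * p i) →
        (∀ p ∈ P, Summable fun i => ‖y i‖ * p i) →
        (∀ p ∈ P, Summable fun i => ‖x i * y i‖ * p i)) ↔
      (∀ p ∈ P, ∃ q ∈ P, ∃ C : ℝ, 0 < C ∧ ∀ i, p i ≤ C * (q i) ^ 2) := by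
  constructor
  · -- hard direction
    intro hmul p hp
    by_contra hcon
    push_neg at hcon
    obtain ⟨Q, hQr⟩ := hPcount.exists_eq_range ⟨p, hp⟩
    have hQmem : ∀ n, Q n ∈ P := fun n => hQr ▸ Set.mem_range_self n
    obtain ⟨r, hrmem, hrstep, hQle⟩ := kothe_chain P Q hQmem hP2
    have hrmono : ∀ a b, a ≤ b → ∀ i, r a i ≤ r b i := by
      intro a b hab
      induction b, hab using Nat.le_induction with
      | base => exact fun i => le_refl _
      | succ b hb ih => exact fun i => (ih i).trans (hrstep b i)
    have hrnn : ∀ n i, 0 ≤ r n i := fun n => hP0 _ (hrmem n)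
    have hpnn : ∀ i, 0 ≤ p i := hP0 p hp
    have hM : ∀ i, ∃ M, ∀ m, M ≤ m → p i ≤ 4 ^ m * (r m i) ^ 2 := by
      intro i
      obtain ⟨q', hq', hq'pos⟩ := hP1 i
      obtain ⟨j, hj⟩ : ∃ j, Q j = q' := by rw [hQr] at hq'; exact hq'
      have hc : 0 < r j i := lt_of_lt_of_le (hj ▸ hq'pos) (hQle j i)
      obtain ⟨N, hN⟩ := pow_unbounded_of_one_lt (p i / (r j i) ^ 2)
        (by norm_num : (1 : ℝ) < 4)
      refine ⟨max j N, fun m hm => ?_⟩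
      have hjm : j ≤ m := le_trans (le_max_left _ _) hm
      have hNm : N ≤ m := le_trans (le_max_right _ _) hm
      have h1 : p i < 4 ^ N * (r j i) ^ 2 := by
        rw [div_lt_iff₀ (by positivity)] at hN; linarith
      have h2 : (4 : ℝ) ^ N ≤ 4 ^ m := pow_le_pow_right₀ (by norm_num) hNm
      have h3 : (r j i) ^ 2 ≤ (r m i) ^ 2 :=
        pow_le_pow_left₀ hc.le (hrmono j m hjm i) 2
      exact h1.le.trans (mul_le_mul h2 h3 (sq_nonneg _) (by positivity))
    have h4 : ∀ m : ℕ, ∃ i, (4 : ℝ) ^ m * (r m i) ^ 2 < p i :=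
      fun m => hcon (r m) (hrmem m) (4 ^ m) (by positivity)
    obtain ⟨ι, m, hinj, hmmono, hkm, hwit⟩ := kothe_seq p r hM h4
    have hppos : ∀ k, 0 < p (ι k) := fun k => lt_of_le_of_lt (by positivity) (hwit k)
    set t : ℕ → ℝ := fun k => if r (m k) (ι k) = 0 then (Real.sqrt (p (ι k)))⁻¹
      else ((2 : ℝ) ^ (m k) * r (m k) (ι k))⁻¹ with ht
    have htnn : ∀ k, 0 ≤ t k := by
      intro k
      rw [ht]
      dsimp only
      split
      · positivity
      · have := hrnn (m k) (ι k); positivity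
    have htsq : ∀ k, 1 ≤ t k ^ 2 * p (ι k) := by
      intro k
      by_cases hr0 : r (m k) (ι k) = 0
      · rw [ht]
        simp only [if_pos hr0]
        rw [inv_pow, Real.sq_sqrt (hppos k).le, inv_mul_cancel₀ (hppos k).ne']
      · have hrpos : 0 < r (m k) (ι k) := lt_of_le_of_ne (hrnn _ _) (Ne.symm hr0)
        have h24 : ((2 : ℝ) ^ m k) ^ 2 = 4 ^ m k := by
          rw [← pow_mul, mul_comm, pow_mul]; norm_num
        have hpos : 0 < (4 : ℝ) ^ m k * (r (m k) (ι k)) ^ 2 := by positivity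
        rw [ht]
        simp only [if_neg hr0]
        rw [inv_pow, mul_pow, h24, inv_mul_eq_div, le_div_iff₀ hpos, one_mul]
        exact (hwit k).le
    have httr : ∀ k, r (m k) (ι k) ≠ 0 → t k * r (m k) (ι k) = ((2 : ℝ) ^ m k)⁻¹ := by
      intro k hr0
      rw [ht]
      simp only [if_neg hr0]
      rw [mul_inv, mul_assoc, inv_mul_cancel₀ hr0, mul_one]
    set xR : I → ℝ := Function.extend ι t (fun _ => 0) with hxR
    set x : I → ℂ := fun i => ((xR i : ℝ) : ℂ) with hx
    have hxRι : ∀ k, xR (ι k) = t k := fun k => hinj.extend_apply t _ k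
    have hxR0 : ∀ i, (¬ ∃ k, ι k = i) → xR i = 0 :=
      fun i hi => Function.extend_apply' t _ i hi
    have hxRnn : ∀ i, 0 ≤ xR i := by
      intro i
      by_cases h : ∃ k, ι k = i
      · obtain ⟨k, rfl⟩ := h
        rw [hxRι]; exact htnn k
      · rw [hxR0 i h]
    have habs : ∀ i, ‖x i‖ = xR i := by
      intro i
      rw [hx]
      simp only
      rw [Complex.norm_real, Real.norm_eq_abs, abs_of_nonneg (hxRnn i)]
    have hxmem : ∀ q ∈ P, Summable fun i => ‖x i‖ * q i := by
      intro q hq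
      obtain ⟨j, hj⟩ : ∃ j, Q j = q := by rw [hQr] at hq; exact hq
      have hbound : ∀ k, j ≤ k → t k * q (ι k) ≤ (1 / 2 : ℝ) ^ k := by
        intro k hk
        have hQr_le : q (ι k) ≤ r (m k) (ι k) := by
          rw [← hj]
          exact (hQle j _).trans (hrmono j (m k) (hk.trans (hkm k)) _)
        by_cases hr0 : r (m k) (ι k) = 0
        · have : q (ι k) = 0 :=
            le_antisymm (hQr_le.trans hr0.le) (hP0 q hq _)
          rw [this, mul_zero]
          positivity
        · calc t k * q (ι k) ≤ t k * r (m k) (ι k) :=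
                mul_le_mul_of_nonneg_left hQr_le (htnn k)
            _ = ((2 : ℝ) ^ m k)⁻¹ := httr k hr0
            _ = (1 / 2 : ℝ) ^ m k := by rw [one_div, inv_pow]
            _ ≤ (1 / 2 : ℝ) ^ k :=
                pow_le_pow_of_le_one (by norm_num) (by norm_num) (hkm k)
      have key : Summable fun k => t k * q (ι k) := by
        rw [← summable_nat_add_iff j]
        apply Summable.of_nonneg_of_le
          (fun k => mul_nonneg (htnn _) (hP0 q hq _))
          (fun k => (hbound (k + j) (Nat.le_add_left j k)).trans
            (pow_le_pow_of_le_one (by norm_num) (by norm_num) (Nat.le_add_right k j)))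
        exact summable_geometric_of_lt_one (by norm_num) (by norm_num)
      refine (hinj.summable_iff ?_).mp ?_
      · intro i hi
        rw [habs, hxR0 i (by simpa [Set.mem_range] using hi), zero_mul]
      · apply key.congr
        intro k
        simp only [Function.comp_apply]
        rw [habs, hxRι]
    have hS := hmul x x hxmem hxmem p hp
    have hge : ∀ k, 1 ≤ ‖x (ι k) * x (ι k)‖ * p (ι k) := by
      intro k
      rw [norm_mul, habs, hxRι, ← sq]
      exact htsq k
    have hev : ∀ᶠ i in Filter.cofinite, ‖x i * x i‖ * p i < 1 :=
      hS.tendsto_cofinite_zero.eventually (gt_mem_nhds zero_lt_one)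
    have hfin : {i | ¬ ‖x i * x i‖ * p i < 1}.Finite :=
      Filter.eventually_cofinite.mp hev
    have hsub : Set.range ι ⊆ {i | ¬ ‖x i * x i‖ * p i < 1} := by
      rintro _ ⟨k, rfl⟩
      exact not_lt.mpr (hge k)
    exact (Set.infinite_range_of_injective hinj) (hfin.subset hsub)
  · -- easy direction
    intro hPP x y hx hy p hp
    obtain ⟨q, hq, C, hC, hpq⟩ := hPP p hp
    have hyq := hy q hq
    set M := ∑' i, ‖y i‖ * q i with hM
    have hMy : ∀ i, ‖y i‖ * q i ≤ M :=
      fun i => Summable.le_tsum hyq i (fun j _ => mul_nonneg (norm_nonneg _) (hP0 q hq j))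
    have hxq := (hx q hq).mul_left (C * M)
    apply Summable.of_nonneg_of_le
      (fun i => mul_nonneg (norm_nonneg _) (hP0 p hp i)) _ hxq
    intro i
    rw [norm_mul]
    have h1 : ‖x i‖ * ‖y i‖ * p i ≤
        ‖x i‖ * ‖y i‖ * (C * q i ^ 2) := by
      apply mul_le_mul_of_nonneg_left (hpq i)
        (mul_nonneg (norm_nonneg _) (norm_nonneg _))
    refine h1.trans ?_
    have h2 : ‖x i‖ * ‖y i‖ * (C * q i ^ 2)
        = C * (‖y i‖ * q i) * (‖x i‖ * q i) := by ring
    rw [h2]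
    calc C * (‖y i‖ * q i) * (‖x i‖ * q i)
        ≤ C * M * (‖x i‖ * q i) := by
          apply mul_le_mul_of_nonneg_right
            (mul_le_mul_of_nonneg_left (hMy i) hC.le)
            (mul_nonneg (norm_nonneg _) (hP0 q hq i))
      _ = (C * M) * (‖x i‖ * q i) := rfl
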